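/- Let m, n ≥ 0. The number of Dyck paths of semilength m+n (paths from (0,0) to (m+n, m+n) never passing below y = x) whose height S_j (number of up-steps minus number of right-steps among the first j steps) satisfies S_j ≤ n+1 for all j, equals Σ_{k∈ℤ} [C(2m+2n, m+n - k(n+3))₊ - C(2m+2n, m+n + k(n+3) + 1)₊], where C(y,z)₊ is the binomial coefficient when y ≥ z ≥ 0 and 0 otherwise. -/

import Mathlib

/-- Binomial coefficient `C(n, k)` with integer lower index, taken to be `0`
when the lower index is negative or exceeds the upper index. -/
def chooseZ (n : ℕ) (k : ℤ) : ℤ :=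
  if 0 ≤ k ∧ k ≤ (n : ℤ) then (n.choose k.toNat : ℤ) else 0

/-- The number of up-steps among the first `j` steps of the lattice path `p`
(`true` = up-step `(0,1)`, `false` = right-step `(1,0)`); after `j` steps the
path is at the point `(j - ups p j, ups p j)`. -/
def ups {len : ℕ} (p : Fin len → Bool) (j : ℕ) : ℕ :=
  (Finset.univ.filter (fun i : Fin len => (i : ℕ) < j ∧ p i = true)).card

lemma chooseZ_succ (j : ℕ) (t : ℤ) :
    chooseZ (j + 1) t = chooseZ j t + chooseZ j (t - 1) := by
  unfold chooseZ
  split_ifs with h1 h2 h3 h2 h3 h3 <;> push_cast at * <;> try omega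
  · have ht : t.toNat = (t - 1).toNat + 1 := by omega
    rw [ht, Nat.choose_succ_succ']
    push_cast
    ring
  · have ht : t = 0 := by omega
    subst ht
    simp
  · have ht : t.toNat = j + 1 := by omega
    have ht' : (t - 1).toNat = j := by omega
    rw [ht, ht', Nat.choose_self, Nat.choose_self]
    norm_num

lemma chooseZ_symm (N : ℕ) (t : ℤ) : chooseZ N t = chooseZ N ((N : ℤ) - t) := by
  unfold chooseZ
  split_ifs with h1 h2 h2 <;> try omega
  · have h3 : t.toNat ≤ N := by omega
    have h4 : ((N : ℤ) - t).toNat = N - t.toNat := by omega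
    rw [h4, Nat.choose_symm h3]

lemma chooseZ_zero_iff (t : ℤ) : chooseZ 0 t = if t = 0 then 1 else 0 := by
  unfold chooseZ
  by_cases ht : t = 0
  · subst ht; norm_num
  · rw [if_neg ht, if_neg (by omega)]

lemma chooseZ_summable (j : ℕ) (c P : ℤ) (hP : 1 ≤ P) :
    Summable (fun k : ℤ => chooseZ j (c + k * P)) := by
  apply summable_of_ne_finset_zero (s := Finset.Icc (-(|c| + j)) (|c| + j))
  intro k hk
  rw [Finset.mem_Icc] at hk
  push_neg at hk
  unfold chooseZ
  rw [if_neg]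
  rintro ⟨hc1, hc2⟩
  have hca : c ≤ |c| := le_abs_self c
  have hcb : -|c| ≤ c := neg_abs_le c
  have hjn : (0 : ℤ) ≤ j := Int.ofNat_nonneg j
  rcases le_or_gt k 0 with hk0 | hk0
  · have hk2 : k < -(|c| + j) := by
      by_contra hcon
      push_neg at hcon
      have := hk hcon
      linarith
    have hkP : k * P ≤ k := by
      have := mul_le_mul_of_nonpos_left hP hk0
      linarith [this, mul_one k]
    linarith
  · have hk2 : |c| + j < k := hk (by linarith)
    have hkP : k ≤ k * P := by
      have := mul_le_mul_of_nonneg_left hP hk0.le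
      linarith [this, mul_one k]
    linarith

noncomputable def Gsum (B j u : ℕ) : ℤ :=
  ∑' k : ℤ, (chooseZ j ((u : ℤ) + k * ((B : ℤ) + 2))
    - chooseZ j ((j : ℤ) - (u : ℤ) - 1 + k * ((B : ℤ) + 2)))

lemma Gsum_summand_summable (B j : ℕ) (c : ℤ) :
    Summable (fun k : ℤ => chooseZ j (c + k * ((B : ℤ) + 2))) :=
  chooseZ_summable j c _ (by omega)

lemma Gsum_pascal (B j u : ℕ) (hu : 1 ≤ u) :
    Gsum B (j + 1) u = Gsum B j u + Gsum B j (u - 1) := by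
  have hcast : ((u - 1 : ℕ) : ℤ) = (u : ℤ) - 1 := by omega
  have S1 : Summable (fun k : ℤ => chooseZ j ((u : ℤ) + k * ((B : ℤ) + 2))
      - chooseZ j ((j : ℤ) - (u : ℤ) - 1 + k * ((B : ℤ) + 2))) :=
    (Gsum_summand_summable B j _).sub (Gsum_summand_summable B j _)
  have S2 : Summable (fun k : ℤ => chooseZ j (((u - 1 : ℕ) : ℤ) + k * ((B : ℤ) + 2))
      - chooseZ j ((j : ℤ) - ((u - 1 : ℕ) : ℤ) - 1 + k * ((B : ℤ) + 2))) :=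
    (Gsum_summand_summable B j _).sub (Gsum_summand_summable B j _)
  unfold Gsum
  rw [← Summable.tsum_add S1 S2]
  apply tsum_congr
  intro k
  rw [chooseZ_succ, chooseZ_succ]
  have e1 : ((j + 1 : ℕ) : ℤ) - (u : ℤ) - 1 + k * ((B : ℤ) + 2)
      = (j : ℤ) - ((u - 1 : ℕ) : ℤ) - 1 + k * ((B : ℤ) + 2) := by rw [hcast]; push_cast; ring
  have e2 : (u : ℤ) + k * ((B : ℤ) + 2) - 1 = ((u - 1 : ℕ) : ℤ) + k * ((B : ℤ) + 2) := by
    rw [hcast]; ring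
  have e3 : (j : ℤ) - ((u - 1 : ℕ) : ℤ) - 1 + k * ((B : ℤ) + 2) - 1
      = (j : ℤ) - (u : ℤ) - 1 + k * ((B : ℤ) + 2) := by rw [hcast]; ring
  rw [e1, e2, e3]
  ring

lemma Gsum_lower (B j u : ℕ) (h : j = 2 * u + 1) : Gsum B j u = 0 := by
  unfold Gsum
  have key : ∀ k : ℤ, chooseZ j ((u : ℤ) + k * ((B : ℤ) + 2))
      - chooseZ j ((j : ℤ) - u - 1 + k * ((B : ℤ) + 2)) = 0 := by
    intro k
    have e : (j : ℤ) - u - 1 + k * ((B : ℤ) + 2) = (u : ℤ) + k * ((B : ℤ) + 2) := by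
      have hz : (j : ℤ) = 2 * u + 1 := by omega
      rw [hz]; ring
    rw [e, sub_self]
  rw [tsum_congr key, tsum_zero]

lemma Gsum_upper (B j u : ℕ) (h : 2 * u = j + B + 1) : Gsum B j u = 0 := by
  unfold Gsum
  have key : ∀ k : ℤ, chooseZ j ((j : ℤ) - u - 1 + k * ((B : ℤ) + 2))
      = chooseZ j ((u : ℤ) + (k - 1) * ((B : ℤ) + 2)) := by
    intro k
    congr 1
    have hz : (j : ℤ) = 2 * u - B - 1 := by omega
    rw [hz]; ring
  rw [tsum_congr (fun k => by rw [key k])]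
  have hshift := (Equiv.subRight (1 : ℤ)).tsum_eq
    (fun k => chooseZ j ((u : ℤ) + k * ((B : ℤ) + 2)))
  simp only [Equiv.subRight_apply] at hshift
  have S2 : Summable (fun k : ℤ => chooseZ j ((u : ℤ) + (k - 1) * ((B : ℤ) + 2))) := by
    have hs := ((Equiv.subRight (1 : ℤ)).summable_iff).mpr (Gsum_summand_summable B j (u : ℤ))
    simpa [Function.comp_def, Equiv.subRight_apply] using hs
  rw [Summable.tsum_sub (Gsum_summand_summable B j (u : ℤ)) S2, hshift, sub_self]

lemma Gsum_zero (B u : ℕ) (h : 2 * u ≤ B) : Gsum B 0 u = if u = 0 then 1 else 0 := by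
  unfold Gsum
  have key : ∀ k : ℤ, chooseZ 0 ((u : ℤ) + k * ((B : ℤ) + 2))
      - chooseZ 0 ((0 : ℕ) - (u : ℤ) - 1 + k * ((B : ℤ) + 2))
      = if u = 0 ∧ k = 0 then (1 : ℤ) else 0 := by
    intro k
    rw [chooseZ_zero_iff, chooseZ_zero_iff]
    have hB : (u : ℤ) ≤ (B : ℤ) := by omega
    have hu0 : (0 : ℤ) ≤ (u : ℤ) := Int.ofNat_nonneg u
    have hbig : k ≠ 0 →
        k * ((B : ℤ) + 2) ≤ -(B : ℤ) - 2 ∨ (B : ℤ) + 2 ≤ k * ((B : ℤ) + 2) := by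
      intro hk'
      rcases lt_or_gt_of_ne hk' with hlt | hgt
      · left
        have h1 : k ≤ -1 := by omega
        nlinarith
      · right
        have h1 : 1 ≤ k := by omega
        nlinarith
    have c1 : ((u : ℤ) + k * ((B : ℤ) + 2) = 0) ↔ (u = 0 ∧ k = 0) := by
      constructor
      · intro hc
        by_cases hk : k = 0
        · subst hk
          norm_num at hc
          exact ⟨by exact_mod_cast hc, rfl⟩
        · exfalso
          rcases hbig hk with hle | hge <;> linarith
      · rintro ⟨h1', h2'⟩
        subst h2'
        simp [h1']
    have c2 : ¬(((0 : ℕ) : ℤ) - (u : ℤ) - 1 + k * ((B : ℤ) + 2) = 0) := by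
      intro hc
      by_cases hk : k = 0
      · subst hk
        norm_num at hc
        omega
      · rcases hbig hk with hle | hge
        · norm_num at hc
          linarith
        · norm_num at hc
          linarith
    rw [if_neg c2]
    simp only [c1, sub_zero]
  rw [tsum_congr key]
  by_cases hu : u = 0
  · simp only [hu, true_and]
    simp only [if_true]
    exact tsum_ite_eq (0 : ℤ) (fun _ => (1 : ℤ))
  · simp [hu]
/-! ### The recursive count -/

def Acnt (B : ℕ) : ℕ → ℕ → ℕ
  | 0, u => if u = 0 then 1 else 0
  | (j + 1), u =>
    if j + 1 ≤ 2 * u ∧ 2 * u ≤ j + 1 + B then Acnt B j (u - 1) + Acnt B j u else 0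

lemma Acnt_eq_zero (B j u : ℕ) (h : ¬(j ≤ 2 * u ∧ 2 * u ≤ j + B)) : Acnt B j u = 0 := by
  cases j with
  | zero =>
    rw [Acnt, if_neg]
    omega
  | succ j =>
    rw [Acnt, if_neg h]

lemma Acnt_eq_Gsum (B : ℕ) : ∀ j u : ℕ, j ≤ 2 * u → 2 * u ≤ j + B →
    (Acnt B j u : ℤ) = Gsum B j u := by
  intro j
  induction j with
  | zero =>
    intro u _ h2
    rw [Acnt, Gsum_zero B u (by omega)]
    split_ifs <;> simp
  | succ j ih =>
    intro u h1 h2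
    have hu : 1 ≤ u := by omega
    rw [Acnt, if_pos ⟨h1, h2⟩]
    have e1 : (Acnt B j (u - 1) : ℤ) = Gsum B j (u - 1) := by
      by_cases hcase : j ≤ 2 * (u - 1)
      · exact ih (u - 1) hcase (by omega)
      · have hj : j = 2 * (u - 1) + 1 := by omega
        rw [Acnt_eq_zero B j (u - 1) (by omega), Gsum_lower B j (u - 1) hj]
        simp
    have e2 : (Acnt B j u : ℤ) = Gsum B j u := by
      by_cases hcase : 2 * u ≤ j + B
      · exact ih u (by omega) hcase
      · have hj : 2 * u = j + B + 1 := by omega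
        rw [Acnt_eq_zero B j u (by omega), Gsum_upper B j u hj]
        simp
    rw [Gsum_pascal B j u hu]
    push_cast
    rw [e1, e2]
    ring

/-! ### `ups` lemmas -/

lemma ups_snoc {j : ℕ} (p : Fin j → Bool) (b : Bool) (i : ℕ) :
    ups (Fin.snoc p b : Fin (j + 1) → Bool) i
      = ups p i + (if j < i ∧ b = true then 1 else 0) := by
  unfold ups
  rw [Finset.card_filter, Finset.card_filter, Fin.sum_univ_castSucc]
  congr 1
  · apply Finset.sum_congr rfl
    intro x _
    simp [Fin.snoc_castSucc]
  · simp [Fin.snoc_last, Fin.val_last]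

lemma ups_of_le {j i : ℕ} (p : Fin j → Bool) (h : j ≤ i) : ups p i = ups p j := by
  unfold ups
  congr 1
  apply Finset.filter_congr
  intro x _
  have := x.isLt
  constructor <;> (rintro ⟨h1, h2⟩; exact ⟨by omega, h2⟩)

/-! ### The counting lemma -/

def pathSnocEquiv (j : ℕ) : (Fin j → Bool) × Bool ≃ (Fin (j + 1) → Bool) where
  toFun x := Fin.snoc x.1 x.2
  invFun q := (Fin.init q, q (Fin.last j))
  left_inv x := by
    ext i
    · simp [Fin.init_snoc]
    · simp [Fin.snoc_last]
  right_inv q := by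
    simp [Fin.snoc_init_self]

lemma card_count (B : ℕ) : ∀ j u : ℕ,
    ((Finset.univ : Finset (Fin j → Bool)).filter (fun p =>
      ups p j = u ∧ ∀ i ≤ j, i ≤ 2 * ups p i ∧ 2 * ups p i ≤ i + B)).card = Acnt B j u := by
  intro j
  induction j with
  | zero =>
    intro u
    rw [Acnt]
    have hup : ∀ (p : Fin 0 → Bool) (i : ℕ), ups p i = 0 := by
      intro p i
      unfold ups
      simp
    by_cases hu : u = 0
    · subst hu
      rw [Finset.filter_true_of_mem, Finset.card_univ]
      · simp
      · intro p _
        refine ⟨hup p 0, ?_⟩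
        intro i hi
        interval_cases i
        simp [hup]
    · rw [if_neg hu, Finset.card_eq_zero, Finset.filter_eq_empty_iff]
      intro p _
      rw [hup]
      intro hcon
      exact hu hcon.1.symm
  | succ j ih =>
    intro u
    classical
    set Q : (Fin (j + 1) → Bool) → Prop := fun q =>
      ups q (j + 1) = u ∧ ∀ i ≤ j + 1, i ≤ 2 * ups q i ∧ 2 * ups q i ≤ i + B with hQdef
    have hsplit : ∀ (p : Fin j → Bool) (b : Bool),
        Q (Fin.snoc p b) ↔ ((j + 1 ≤ 2 * u ∧ 2 * u ≤ j + 1 + B) ∧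
          (ups p j + (if b = true then 1 else 0) = u ∧
            ∀ i ≤ j, i ≤ 2 * ups p i ∧ 2 * ups p i ≤ i + B)) := by
      intro p b
      have h1 : ups (Fin.snoc p b : Fin (j + 1) → Bool) (j + 1)
          = ups p j + (if b = true then 1 else 0) := by
        rw [ups_snoc, ups_of_le p (Nat.le_succ j)]
        congr 1
        simp
      have h2 : ∀ i ≤ j, ups (Fin.snoc p b : Fin (j + 1) → Bool) i = ups p i := by
        intro i hi
        rw [ups_snoc, if_neg (by omega : ¬(j < i ∧ b = true)), add_zero]
      rw [hQdef]
      constructor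
      · rintro ⟨he, hall⟩
        have hg := hall (j + 1) le_rfl
        rw [he] at hg
        refine ⟨hg, by rw [← h1]; exact he, ?_⟩
        intro i hi
        have := hall i (by omega)
        rwa [h2 i hi] at this
      · rintro ⟨hg, he, hall⟩
        refine ⟨by rw [h1]; exact he, ?_⟩
        intro i hi
        by_cases hij : i ≤ j
        · rw [h2 i hij]
          exact hall i hij
        · have hieq : i = j + 1 := by omega
          subst hieq
          rw [h1, he]
          exact hg
    have hcard : ((Finset.univ : Finset (Fin (j + 1) → Bool)).filter Q).card
        = ((Finset.univ : Finset (Fin j → Bool)).filter (fun p => Q (Fin.snoc p true))).card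
        + ((Finset.univ : Finset (Fin j → Bool)).filter (fun p => Q (Fin.snoc p false))).card := by
      rw [Finset.card_filter, Finset.card_filter, Finset.card_filter]
      rw [← Fintype.sum_equiv (pathSnocEquiv j)
        (fun x : (Fin j → Bool) × Bool => if Q (pathSnocEquiv j x) then 1 else 0)
        (fun q => if Q q then 1 else 0) (fun x => rfl)]
      rw [Fintype.sum_prod_type, ← Finset.sum_add_distrib]
      apply Finset.sum_congr rfl
      intro p _
      rw [Fintype.sum_bool]
      rfl
    rw [hcard]
    by_cases hg : j + 1 ≤ 2 * u ∧ 2 * u ≤ j + 1 + B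
    · have hu1 : 1 ≤ u := by omega
      have hiffT : ∀ p : Fin j → Bool, Q (Fin.snoc p true) ↔
          (ups p j = u - 1 ∧ ∀ i ≤ j, i ≤ 2 * ups p i ∧ 2 * ups p i ≤ i + B) := by
        intro p
        rw [hsplit p true]
        constructor
        · rintro ⟨-, he, ho⟩
          refine ⟨by simp at he; omega, ho⟩
        · rintro ⟨he, ho⟩
          exact ⟨hg, by simp; omega, ho⟩
      have hiffF : ∀ p : Fin j → Bool, Q (Fin.snoc p false) ↔
          (ups p j = u ∧ ∀ i ≤ j, i ≤ 2 * ups p i ∧ 2 * ups p i ≤ i + B) := by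
        intro p
        rw [hsplit p false]
        constructor
        · rintro ⟨-, he, ho⟩
          refine ⟨by simpa using he, ho⟩
        · rintro ⟨he, ho⟩
          exact ⟨hg, by simpa using he, ho⟩
      have ht : ((Finset.univ : Finset (Fin j → Bool)).filter
          (fun p => Q (Fin.snoc p true))).card = Acnt B j (u - 1) := by
        rw [Finset.filter_congr (fun p _ => hiffT p)]
        exact ih (u - 1)
      have hf : ((Finset.univ : Finset (Fin j → Bool)).filter
          (fun p => Q (Fin.snoc p false))).card = Acnt B j u := by
        rw [Finset.filter_congr (fun p _ => hiffF p)]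
        exact ih u
      rw [ht, hf, Acnt, if_pos hg]
    · have hz : ∀ b, ((Finset.univ : Finset (Fin j → Bool)).filter
          (fun p => Q (Fin.snoc p b))).card = 0 := by
        intro b
        rw [Finset.card_eq_zero, Finset.filter_eq_empty_iff]
        intro p _
        rw [hsplit]
        rintro ⟨hgg, -⟩
        exact hg hgg
      rw [hz, hz, Acnt, if_neg hg]

/-- Let `m, n ≥ 0`. The number of Dyck paths of semilength `m+n` (paths from
`(0,0)` to `(m+n, m+n)` never passing below `y = x`) whose height
`S_j = (#ups) - (#rights)` among the first `j` steps satisfies `S_j ≤ n + 1`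
for all `j`, equals
`Σ_{k ∈ ℤ} [C(2m+2n, m+n - k(n+3))₊ - C(2m+2n, m+n + k(n+3) + 1)₊]`. -/
theorem count_bounded_height_dyck_paths (m n : ℕ) :
    (((Finset.univ : Finset (Fin (2 * (m + n)) → Bool)).filter (fun p =>
        ups p (2 * (m + n)) = m + n ∧
        (∀ j ≤ 2 * (m + n), j ≤ 2 * ups p j) ∧
        ∀ j ≤ 2 * (m + n), 2 * ups p j ≤ j + (n + 1))).card : ℤ)
      = ∑' k : ℤ, (chooseZ (2 * m + 2 * n) ((m : ℤ) + n - k * (n + 3))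
          - chooseZ (2 * m + 2 * n) ((m : ℤ) + n + k * (n + 3) + 1)) := by
  classical
  have hfilter : ((Finset.univ : Finset (Fin (2 * (m + n)) → Bool)).filter (fun p =>
        ups p (2 * (m + n)) = m + n ∧
        (∀ j ≤ 2 * (m + n), j ≤ 2 * ups p j) ∧
        ∀ j ≤ 2 * (m + n), 2 * ups p j ≤ j + (n + 1)))
      = ((Finset.univ : Finset (Fin (2 * (m + n)) → Bool)).filter (fun p =>
        ups p (2 * (m + n)) = m + n ∧
        ∀ i ≤ 2 * (m + n), i ≤ 2 * ups p i ∧ 2 * ups p i ≤ i + (n + 1))) := by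
    apply Finset.filter_congr
    intro p _
    constructor
    · rintro ⟨h1, h2, h3⟩
      exact ⟨h1, fun i hi => ⟨h2 i hi, h3 i hi⟩⟩
    · rintro ⟨h1, h2⟩
      exact ⟨h1, fun i hi => (h2 i hi).1, fun i hi => (h2 i hi).2⟩
  rw [hfilter, card_count (n + 1) (2 * (m + n)) (m + n)]
  rw [show 2 * (m + n) = 2 * m + 2 * n by ring]
  rw [Acnt_eq_Gsum (n + 1) (2 * m + 2 * n) (m + n) (by omega) (by omega)]
  unfold Gsum
  have step : ∀ k : ℤ,
      chooseZ (2 * m + 2 * n) (((m + n : ℕ) : ℤ) + k * (((n + 1 : ℕ) : ℤ) + 2))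
        - chooseZ (2 * m + 2 * n)
            (((2 * m + 2 * n : ℕ) : ℤ) - ((m + n : ℕ) : ℤ) - 1 + k * (((n + 1 : ℕ) : ℤ) + 2))
      = chooseZ (2 * m + 2 * n) ((m : ℤ) + n - (-k) * ((n : ℤ) + 3))
        - chooseZ (2 * m + 2 * n) ((m : ℤ) + n + (-k) * ((n : ℤ) + 3) + 1) := by
    intro k
    rw [chooseZ_symm (2 * m + 2 * n)
      (((2 * m + 2 * n : ℕ) : ℤ) - ((m + n : ℕ) : ℤ) - 1 + k * (((n + 1 : ℕ) : ℤ) + 2))]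
    congr 1
    · push_cast
      ring
    · push_cast
      ring
  rw [tsum_congr step]
  exact (Equiv.neg ℤ).tsum_eq (fun k : ℤ =>
    chooseZ (2 * m + 2 * n) ((m : ℤ) + n - k * ((n : ℤ) + 3))
      - chooseZ (2 * m + 2 * n) ((m : ℤ) + n + k * ((n : ℤ) + 3) + 1))
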